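/- Uniqueness/characterization of decompositions (abstract Theorem 3): In the setting of the abstract structure theorem (M an 𝔽_p[H]-module, H = ⟨σ⟩ of order p, c: M → A surjective with ker c = (σ−1)M, r: A → M with r∘c = (σ−1)^{p−1}, c(M^H) = ker r, and M^H ∩ (σ−1)M = (σ−1)^{p−1}M), suppose X is a trivial 𝔽_p[H]-submodule and Y a free 𝔽_p[H]-submodule of M. Then c(X) ⊆ ker r, and the following are equivalent: (1) c restricts to an isomorphism X → ker r and Y is a maximal free 𝔽_p[H]-submodule of M; (2) M = X ⊕ Y. -/

import Mathlib

/-- The group algebra `𝔽_p[H]` for `H` the cyclic group of order `p`, generated by `σ`. -/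
abbrev Sp (p : ℕ) : Type := MonoidAlgebra (ZMod p) (Multiplicative (ZMod p))

/-- The generator `σ` of the cyclic group `H`, as an element of the group algebra. -/
noncomputable def sigma (p : ℕ) : Sp p :=
  MonoidAlgebra.of (ZMod p) (Multiplicative (ZMod p)) (Multiplicative.ofAdd 1)

/-- Scalar multiplication by `s ∈ 𝔽_p[H]` as an `𝔽_p`-linear endomorphism. -/
noncomputable def smulMap (p : ℕ) (M : Type*) [AddCommGroup M] [Module (Sp p) M]
    [Module (ZMod p) M] [IsScalarTower (ZMod p) (Sp p) M] (s : Sp p) :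
    M →ₗ[ZMod p] M :=
  (LinearMap.lsmul (Sp p) M s).restrictScalars (ZMod p)

section ring
variable (p : ℕ) [Fact p.Prime]

lemma sigma_pow_p : sigma p ^ p = 1 := by
  unfold sigma
  rw [← map_pow]
  have : (Multiplicative.ofAdd (1 : ZMod p)) ^ p = 1 := by
    rw [← ofAdd_nsmul]; simp
  rw [this, map_one]

instance : CharP (Sp p) p := by
  have : Function.Injective (algebraMap (ZMod p) (Sp p)) := by
    intro a b h
    have := congrArg (fun f : Sp p => f.coeff 1) h
    simpa [MonoidAlgebra.coe_algebraMap, MonoidAlgebra.single_apply] using this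
  exact charP_of_injective_algebraMap this p

lemma pi_pow_p : (sigma p - 1) ^ p = 0 := by
  have : (sigma p - 1) ^ p = sigma p ^ p - 1 ^ p := sub_pow_char _ _
  rw [sigma_pow_p, one_pow, sub_self] at this
  exact this
end ring

section basis
variable (p : ℕ) [Fact p.Prime]

local notation "π" => sigma p - 1

lemma span_pi_pow :
    ⊤ ≤ Submodule.span (ZMod p) (Set.range fun i : Fin p => π ^ (i : ℕ)) := by
  set S := Submodule.span (ZMod p) (Set.range fun i : Fin p => π ^ (i : ℕ)) with hS
  have hp2 : 0 < p := (Fact.out : p.Prime).pos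
  have hmul : ∀ s ∈ S, π * s ∈ S := by
    intro s hs
    refine Submodule.span_induction (p := fun s _ => π * s ∈ S) ?_ ?_ ?_ ?_ hs
    · rintro x ⟨i, rfl⟩
      simp only
      rw [← pow_succ']
      rcases lt_or_ge ((i : ℕ) + 1) p with h | h
      · exact Submodule.subset_span ⟨⟨(i : ℕ) + 1, h⟩, rfl⟩
      · have : (i : ℕ) + 1 = p := le_antisymm i.2 h
        rw [this, pi_pow_p]
        exact S.zero_mem
    · simp
    · intro a b _ _ ha hb; rw [mul_add]; exact S.add_mem ha hb
    · intro a x _ hx; rw [mul_smul_comm]; exact S.smul_mem a hx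
  have hsig : ∀ n : ℕ, sigma p ^ n ∈ S := by
    intro n
    induction n with
    | zero => exact Submodule.subset_span ⟨⟨0, hp2⟩, by simp⟩
    | succ n ih =>
        have : sigma p ^ (n + 1) = π * (sigma p ^ n) + sigma p ^ n := by ring
        rw [this]
        exact S.add_mem (hmul _ ih) ih
  -- every basis vector single g 1 is sigma ^ (val g)
  have hone : ∀ g : Multiplicative (ZMod p),
      MonoidAlgebra.single g (1 : ZMod p) ∈ S := by
    intro g
    have : MonoidAlgebra.single g (1 : ZMod p) = sigma p ^ (g.toAdd.val) := by
      unfold sigma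
      rw [← map_pow]
      congr 1
      rw [← ofAdd_nsmul]
      simp [ZMod.natCast_self]
    rw [this]; exact hsig _
  intro x _
  have hx : x = Finsupp.sum x.coeff (fun g a => a • MonoidAlgebra.single g (1 : ZMod p)) := by
    conv_lhs => rw [← MonoidAlgebra.sum_coeff_single x]
    refine Finsupp.sum_congr fun g _ => ?_
    rw [MonoidAlgebra.smul_single, smul_eq_mul, mul_one]
  rw [hx]
  exact Submodule.sum_mem _ fun g _ => S.smul_mem _ (hone g)

lemma finrank_Sp : Module.finrank (ZMod p) (Sp p) = p := by
  classical
  have b : Module.Basis (Multiplicative (ZMod p)) (ZMod p) (Sp p) :=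
    MonoidAlgebra.basis (Multiplicative (ZMod p)) (ZMod p)
  rw [Module.finrank_eq_card_basis b]
  simp [ZMod.card]

noncomputable def piBasis : Module.Basis (Fin p) (ZMod p) (Sp p) :=
  basisOfTopLeSpanOfCardEqFinrank (fun i : Fin p => π ^ (i : ℕ))
    (span_pi_pow p) (by simp [finrank_Sp])

lemma piBasis_apply (i : Fin p) : piBasis p i = π ^ (i : ℕ) := by
  rw [piBasis, coe_basisOfTopLeSpanOfCardEqFinrank]

end basis

section structure_lemmas
variable (p : ℕ) [Fact p.Prime]
local notation "π" => sigma p - 1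

lemma isUnit_of_repr_zero_ne (s : Sp p) (h : (piBasis p).repr s 0 ≠ 0) :
    IsUnit s := by
  classical
  set b := piBasis p
  set a := b.repr s with ha
  have hs : s = ∑ i : Fin p, a i • (π ^ (i : ℕ)) := by
    conv_lhs => rw [← b.sum_repr s]
    exact Finset.sum_congr rfl fun i _ => by rw [piBasis_apply]
  have hp2 : 0 < p := (Fact.out : p.Prime).pos
  have h0 : (0 : Fin p) = ⟨0, hp2⟩ := rfl
  have hsplit : s = a 0 • (1 : Sp p) +
      ∑ i ∈ Finset.univ.erase 0, a i • (π ^ (i : ℕ)) := by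
    rw [hs, ← Finset.add_sum_erase _ _ (Finset.mem_univ (0 : Fin p))]
    simp only [h0, Fin.val_mk, pow_zero]
  set w : Sp p := ∑ i ∈ Finset.univ.erase (0 : Fin p), a i • (π ^ ((i : ℕ) - 1)) with hw
  have hπw : π * w = ∑ i ∈ Finset.univ.erase (0 : Fin p), a i • (π ^ (i : ℕ)) := by
    rw [hw, Finset.mul_sum]
    refine Finset.sum_congr rfl fun i hi => ?_
    have hi0 : (i : ℕ) ≠ 0 := by
      intro hc
      exact (Finset.mem_erase.mp hi).1 (Fin.ext (by simp [hc]))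
    have he : ((i : ℕ) - 1) + 1 = (i : ℕ) := by omega
    rw [mul_smul_comm, ← pow_succ', he]
  have hnil : IsNilpotent (π * w) := ⟨p, by rw [mul_pow, pi_pow_p, zero_mul]⟩
  have hunit : IsUnit (a 0 • (1 : Sp p)) := by
    have : IsUnit (a 0) := isUnit_iff_ne_zero.mpr h
    have h2 : a 0 • (1 : Sp p) = algebraMap (ZMod p) (Sp p) (a 0) := by
      rw [Algebra.algebraMap_eq_smul_one]
    rw [h2]
    exact this.map (algebraMap (ZMod p) (Sp p))
  have : s = a 0 • (1 : Sp p) + π * w := by rw [hπw]; exact hsplit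
  rw [this]
  exact hnil.isUnit_add_left_of_commute hunit (Commute.all _ _)

lemma exists_pow_mul_unit (s : Sp p) (hs : s ≠ 0) :
    ∃ j : ℕ, j < p ∧ ∃ u : Sp p, IsUnit u ∧ s = π ^ j * u := by
  classical
  set b := piBasis p
  set a := b.repr s with ha
  have hane : a ≠ 0 := fun hc => hs (by
    have := congrArg b.repr.symm hc
    simpa [ha] using this)
  have hne : a.support.Nonempty := Finsupp.support_nonempty_iff.mpr hane
  set j : Fin p := a.support.min' hne with hj
  have hja : a j ≠ 0 := Finsupp.mem_support_iff.mp (a.support.min'_mem hne)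
  have hlow : ∀ i : Fin p, i < j → a i = 0 := by
    intro i hij
    by_contra hc
    exact absurd (a.support.min'_le i (Finsupp.mem_support_iff.mpr hc)) (not_le.mpr hij)
  set t : Sp p := ∑ i : Fin p, a i • (π ^ ((i : ℕ) - (j : ℕ))) with ht
  have hsum : s = ∑ i : Fin p, a i • (π ^ (i : ℕ)) := by
    conv_lhs => rw [← b.sum_repr s]
    exact Finset.sum_congr rfl fun i _ => by rw [piBasis_apply]
  have hfact : s = π ^ (j : ℕ) * t := by
    rw [ht, Finset.mul_sum, hsum]
    refine Finset.sum_congr rfl fun i _ => ?_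
    rcases lt_or_ge i j with h | h
    · rw [hlow i h]; simp
    · have hji : (j : ℕ) ≤ (i : ℕ) := h
      have he : (j : ℕ) + ((i : ℕ) - (j : ℕ)) = (i : ℕ) := by omega
      rw [mul_smul_comm, ← pow_add, he]
  have hterm : ∀ i : Fin p,
      b.repr (a i • (π ^ ((i : ℕ) - (j : ℕ)))) 0 = if i = j then a j else 0 := by
    intro i
    have hlt : (i : ℕ) - (j : ℕ) < p := lt_of_le_of_lt (Nat.sub_le _ _) i.2
    have hbe : (π ^ ((i : ℕ) - (j : ℕ))) = b ⟨(i : ℕ) - (j : ℕ), hlt⟩ := by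
      rw [piBasis_apply]
    rw [map_smul, hbe, b.repr_self, Finsupp.smul_apply, Finsupp.single_apply]
    rcases lt_trichotomy i j with h | h | h
    · rw [hlow i h, if_neg (ne_of_lt h)]
      simp
    · subst h
      rw [if_pos rfl]
      rw [if_pos (by simp [Fin.ext_iff])]
      simp
    · have hne0 : (i : ℕ) - (j : ℕ) ≠ 0 := by
        have := Fin.lt_iff_val_lt_val.mp h
        omega
      rw [if_neg (ne_of_gt h), if_neg (by
        intro hc
        apply hne0
        have : ((⟨(i : ℕ) - (j : ℕ), hlt⟩ : Fin p) : ℕ) = ((0 : Fin p) : ℕ) := by rw [hc]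
        simpa using this)]
      simp
  have hrt : b.repr t 0 = a j := by
    rw [ht, map_sum, Finsupp.finset_sum_apply]
    rw [Finset.sum_congr rfl fun i _ => hterm i]
    simp
  exact ⟨(j : ℕ), j.2, t, isUnit_of_repr_zero_ne p t (by rw [hrt]; exact hja), hfact⟩

lemma pi_pow_ne_zero {k : ℕ} (hk : k < p) : (π ^ k : Sp p) ≠ 0 := by
  have : (π ^ k : Sp p) = piBasis p ⟨k, hk⟩ := by rw [piBasis_apply]
  rw [this]
  exact (piBasis p).ne_zero _

lemma ann_pi (s : Sp p) (h : π * s = 0) : ∃ t : Sp p, s = π ^ (p - 1) * t := by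
  rcases eq_or_ne s 0 with rfl | hs
  · exact ⟨0, by rw [mul_zero]⟩
  · obtain ⟨j, hj, u, hu, rfl⟩ := exists_pow_mul_unit p s hs
    have hp0 : π ^ (j + 1) * u = 0 := by
      have he : π ^ (j + 1) * u = π * (π ^ j * u) := by ring
      rw [he, h]
    have : (π : Sp p) ^ (j + 1) = 0 := (IsUnit.mul_left_eq_zero hu).mp hp0
    have hj1 : ¬ (j + 1 < p) := fun hc => pi_pow_ne_zero p hc this
    have : j = p - 1 := by omega
    exact ⟨u, by rw [this]⟩
end structure_lemmas

section module_lemmas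
variable (p : ℕ) [Fact p.Prime]
local notation "π" => sigma p - 1

/-- In a free module over `Sp p`, the annihilator of `π` is `π^(p-1)` times the module. -/
lemma free_ann {F : Type*} [AddCommGroup F] [Module (Sp p) F] [Module.Free (Sp p) F]
    (y : F) (h : π • y = 0) : ∃ z : F, y = π ^ (p - 1) • z := by
  classical
  set B := Module.Free.chooseBasis (Sp p) F with hB
  set a := B.repr y with ha
  have hco : ∀ i, π * a i = 0 := by
    intro i
    have : B.repr (π • y) = π • a := by rw [map_smul]
    rw [h, map_zero] at this
    have := congrArg (fun f => f i) this.symm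
    simpa using this
  have hch : ∀ i, ∃ t : Sp p, a i = π ^ (p - 1) * t := fun i => ann_pi p (a i) (hco i)
  choose g hg using hch
  refine ⟨∑ i ∈ a.support, g i • B i, ?_⟩
  rw [Finset.smul_sum]
  have hy : y = ∑ i ∈ a.support, a i • B i := by
    conv_lhs => rw [← B.linearCombination_repr y]
    rw [Finsupp.linearCombination_apply, Finsupp.sum]
  rw [hy]
  refine Finset.sum_congr rfl fun i _ => ?_
  rw [smul_smul, ← hg i]

/-- The sup of two disjoint free submodules is free. -/
lemma free_sup {M : Type*} [AddCommGroup M] [Module (Sp p) M]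
    (N₁ N₂ : Submodule (Sp p) M) (h₁ : Module.Free (Sp p) N₁)
    (h₂ : Module.Free (Sp p) N₂) (hd : Disjoint N₁ N₂) :
    Module.Free (Sp p) ↥(N₁ ⊔ N₂) := by
  set f : (N₁ × N₂) →ₗ[Sp p] M := N₁.subtype.coprod N₂.subtype with hf
  have hinj : Function.Injective f := by
    rw [← LinearMap.ker_eq_bot]
    rw [Submodule.eq_bot_iff]
    rintro ⟨x, y⟩ hxy
    have hx : (x : M) + (y : M) = 0 := hxy
    have : (x : M) ∈ N₁ ⊓ N₂ := by
      refine ⟨x.2, ?_⟩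
      have : (x : M) = -(y : M) := by rw [eq_neg_iff_add_eq_zero]; exact hx
      rw [this]
      exact N₂.neg_mem y.2
    rw [hd.eq_bot] at this
    have hx0 : (x : M) = 0 := this
    have hy0 : (y : M) = 0 := by rw [hx0] at hx; simpa using hx
    exact Prod.ext (Subtype.ext hx0) (Subtype.ext hy0)
  have hrange : LinearMap.range f = N₁ ⊔ N₂ := by
    rw [hf, LinearMap.range_coprod, Submodule.range_subtype, Submodule.range_subtype]
  have e : (N₁ × N₂) ≃ₗ[Sp p] ↥(N₁ ⊔ N₂) :=
    (LinearEquiv.ofInjective f hinj).trans (LinearEquiv.ofEq _ _ hrange)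
  exact Module.Free.of_equiv e
end module_lemmas


/-- Characterization of decompositions (abstract Theorem 3): in the setting of the
abstract structure theorem, for `X` trivial and `Y` free, `c(X) ⊆ ker r`, and
`c : X ≅ ker r` with `Y` maximal free ⟺ `M = X ⊕ Y`. -/
theorem stmt17 (p : ℕ) [Fact p.Prime]
    (M A : Type*) [AddCommGroup M] [Module (Sp p) M]
    [Module (ZMod p) M] [IsScalarTower (ZMod p) (Sp p) M]
    [AddCommGroup A] [Module (ZMod p) A]
    (c : M →ₗ[ZMod p] A) (r : A →ₗ[ZMod p] M)
    (hrc : ∀ m : M, r (c m) = (sigma p - 1) ^ (p - 1) • m)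
    (hsurj : Function.Surjective c)
    (hker : LinearMap.ker c = LinearMap.range (smulMap p M (sigma p - 1)))
    (hcomm : ∀ m : M, c (sigma p • m) = c m)
    (hfix : Submodule.map c (LinearMap.ker (smulMap p M (sigma p - 1))) = LinearMap.ker r)
    (hmeet : LinearMap.ker (smulMap p M (sigma p - 1)) ⊓
        LinearMap.range (smulMap p M (sigma p - 1)) =
      LinearMap.range (smulMap p M ((sigma p - 1) ^ (p - 1))))
    (X Y : Submodule (Sp p) M)
    (hXtriv : ∀ m ∈ X, sigma p • m = m)
    (hYfree : Module.Free (Sp p) Y) :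
    ⇑c '' X ⊆ LinearMap.ker r ∧
      ((Set.BijOn c X (LinearMap.ker r) ∧
          ∀ Z : Submodule (Sp p) M, Module.Free (Sp p) Z → Y ≤ Z → Y = Z) ↔
        IsCompl X Y) := by
  classical
  have hp2 : 2 ≤ p := (Fact.out : p.Prime).two_le
  set π : Sp p := sigma p - 1 with hπ
  have hπX : ∀ x ∈ X, π • x = 0 := by
    intro x hx
    rw [hπ, sub_smul, one_smul, hXtriv x hx, sub_self]
  have hq : p - 1 = (p - 2) + 1 := by omega
  have hπp : π ^ p = 0 := by rw [hπ]; exact pi_pow_p p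
  have hpq : ∀ m : M, π • m = 0 → π ^ (p - 1) • m = 0 := by
    intro m hm
    rw [hq, pow_succ, mul_smul, hm, smul_zero]
  have hker' : ∀ m : M, c m = 0 ↔ ∃ n : M, π • n = m := by
    intro m
    constructor
    · intro h
      have hm : m ∈ LinearMap.ker c := h
      rw [hker] at hm
      obtain ⟨n, hn⟩ := hm
      exact ⟨n, hn⟩
    · rintro ⟨n, rfl⟩
      have : π • n ∈ LinearMap.ker c := by
        rw [hker]; exact ⟨n, rfl⟩
      exact this
  have hcq : ∀ m : M, c (π ^ (p - 1) • m) = 0 := by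
    intro m
    rw [hker' _]
    refine ⟨π ^ (p - 2) • m, ?_⟩
    rw [← mul_smul, ← pow_succ', ← hq]
  have hann : ∀ (W : Submodule (Sp p) M), Module.Free (Sp p) W → ∀ w ∈ W, π • w = 0 →
      ∃ z ∈ W, w = π ^ (p - 1) • z := by
    intro W hWfree w hw h
    haveI := hWfree
    obtain ⟨z, hz⟩ := free_ann p (F := ↥W) ⟨w, hw⟩ (by
      apply Subtype.ext
      show (sigma p - 1) • w = (0 : M)
      exact h)
    refine ⟨(z : M), z.2, ?_⟩
    have h2 := congrArg (Subtype.val) hz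
    simpa using h2
  have hcX : ⇑c '' X ⊆ LinearMap.ker r := by
    rintro _ ⟨x, hx, rfl⟩
    have hx0 : r (c x) = 0 := by rw [hrc]; exact hpq x (hπX x hx)
    exact hx0
  refine ⟨hcX, ?_⟩
  constructor
  · rintro ⟨hbij, hmax⟩
    obtain ⟨hmap, hinj, hsurj'⟩ := hbij
    constructor
    · rw [Submodule.disjoint_def]
      intro x hxX hxY
      obtain ⟨z, hzY, hz⟩ := hann Y hYfree x hxY (hπX x hxX)
      have h0 : c x = c 0 := by rw [hz, map_zero]; exact hcq z
      exact hinj hxX X.zero_mem h0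
    · rw [codisjoint_iff, eq_top_iff]
      have stepA : ∀ n : M, ∃ x ∈ X, ∃ y ∈ Y, ∃ w : M, n = x + y + π • w := by
        intro n
        by_cases hYm : π ^ (p - 1) • n ∈ Y
        · have hπn : π • (π ^ (p - 1) • n) = 0 := by
            rw [← mul_smul, ← pow_succ']
            have hp1 : (p - 1) + 1 = p := by omega
            rw [hp1, hπp, zero_smul]
          obtain ⟨z, hzY, hz⟩ := hann Y hYfree _ hYm hπn
          have h2 : c (n - z) ∈ LinearMap.ker r := by
            have h1 : r (c (n - z)) = 0 := by
              rw [hrc, smul_sub, ← hz, sub_self]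
            exact h1
          obtain ⟨x, hxX, hcx⟩ := hsurj' h2
          have h3 : c (n - x - z) = 0 := by
            rw [map_sub, map_sub, hcx, map_sub]
            abel
          obtain ⟨w, hw⟩ := (hker' _).mp h3
          refine ⟨x, hxX, z, hzY, w, ?_⟩
          rw [hw]
          abel
        · have key : ∀ s : Sp p, s • n ∈ Y → s = 0 := by
            intro s hsY
            by_contra hs
            obtain ⟨j, hj, u, hu, rfl⟩ := exists_pow_mul_unit p s hs
            apply hYm
            have h4 : (π ^ (p - 1) * u) • n ∈ Y := by
              have h5 : π ^ (p - 1 - j) • ((π ^ j * u) • n) = (π ^ (p - 1) * u) • n := by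
                rw [← mul_smul, ← mul_assoc, ← pow_add]
                have : p - 1 - j + j = p - 1 := by omega
                rw [this]
              rw [← h5]
              exact Y.smul_mem _ hsY
            rcases hu with ⟨v, rfl⟩
            have h5 : π ^ (p - 1) • n =
                ((v⁻¹ : (Sp p)ˣ) : Sp p) • ((π ^ (p - 1) * (v : Sp p)) • n) := by
              rw [← mul_smul, mul_comm (π ^ (p - 1)) (v : Sp p), ← mul_assoc,
                Units.inv_mul, one_mul]
            rw [h5]
            exact Y.smul_mem _ h4
          have hfree1 : Module.Free (Sp p) ↥(Submodule.span (Sp p) {n}) := by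
            have hinjs : Function.Injective (LinearMap.toSpanSingleton (Sp p) M n) := by
              intro s1 s2 hss
              have hd : (s1 - s2) • n = 0 := by
                rw [sub_smul, sub_eq_zero]
                exact hss
              have := key (s1 - s2) (by rw [hd]; exact Y.zero_mem)
              exact sub_eq_zero.mp this
            have e := LinearEquiv.ofInjective (LinearMap.toSpanSingleton (Sp p) M n) hinjs
            rw [LinearMap.span_singleton_eq_range]
            exact Module.Free.of_equiv e
          have hd : Disjoint Y (Submodule.span (Sp p) {n}) := by
            rw [Submodule.disjoint_def]
            intro v hvY hvS
            obtain ⟨s, rfl⟩ := Submodule.mem_span_singleton.mp hvS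
            rw [key s hvY, zero_smul]
          have hZfree := free_sup p Y _ hYfree hfree1 hd
          have hYZ := hmax _ hZfree le_sup_left
          have hnY : n ∈ Y := by
            rw [hYZ]
            exact Submodule.mem_sup_right (Submodule.mem_span_singleton_self n)
          exact absurd (Y.smul_mem _ hnY) hYm
      have stepB : ∀ k : ℕ, ∀ n : M, ∃ x ∈ X, ∃ y ∈ Y, ∃ w : M, n = x + y + π ^ k • w := by
        intro k
        induction k with
        | zero => intro n; exact ⟨0, X.zero_mem, 0, Y.zero_mem, n, by simp⟩
        | succ k ih =>
            intro n
            obtain ⟨x, hx, y, hy, w, hw⟩ := ih n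
            obtain ⟨x', hx', y', hy', w', hw'⟩ := stepA w
            refine ⟨x + π ^ k • x', X.add_mem hx (X.smul_mem _ hx'),
              y + π ^ k • y', Y.add_mem hy (Y.smul_mem _ hy'), w', ?_⟩
            rw [hw, hw', smul_add, smul_add, smul_smul, ← pow_succ]
            abel
      intro m _
      obtain ⟨x, hx, y, hy, w, hw⟩ := stepB p m
      rw [hπp, zero_smul, add_zero] at hw
      exact Submodule.mem_sup.mpr ⟨x, hx, y, hy, hw.symm⟩
  · intro hC
    have hdec : ∀ m : M, ∃ x ∈ X, ∃ y ∈ Y, m = x + y := by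
      intro m
      have hm : m ∈ X ⊔ Y := by rw [hC.sup_eq_top]; trivial
      obtain ⟨x, hx, y, hy, hxy⟩ := Submodule.mem_sup.mp hm
      exact ⟨x, hx, y, hy, hxy.symm⟩
    have hdisj : ∀ m ∈ X, m ∈ Y → m = 0 := fun m h1 h2 =>
      (Submodule.disjoint_def.mp hC.disjoint) m h1 h2
    have hinj0 : ∀ x ∈ X, c x = 0 → x = 0 := by
      intro x hx h0
      obtain ⟨n, hn⟩ := (hker' x).mp h0
      have hxm : x ∈ LinearMap.ker (smulMap p M π) ⊓ LinearMap.range (smulMap p M π) := by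
        constructor
        · show smulMap p M π x = 0
          exact hπX x hx
        · exact ⟨n, hn⟩
      rw [hmeet] at hxm
      obtain ⟨m, hm⟩ := hxm
      have hm' : π ^ (p - 1) • m = x := hm
      obtain ⟨x', hx', y', hy', rfl⟩ := hdec m
      have hxy' : x = π ^ (p - 1) • y' := by
        rw [← hm', smul_add, hpq x' (hπX x' hx'), zero_add]
      have hxY : x ∈ Y := hxy' ▸ Y.smul_mem _ hy'
      exact hdisj x hx hxY
    refine ⟨⟨?_, ?_, ?_⟩, ?_⟩
    · intro x hx
      exact hcX (Set.mem_image_of_mem c hx)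
    · intro x1 h1 x2 h2 he
      have hs : c (x1 - x2) = 0 := by rw [map_sub, he, sub_self]
      have := hinj0 (x1 - x2) (sub_mem h1 h2) hs
      exact sub_eq_zero.mp this
    · intro a ha
      have ha' : a ∈ LinearMap.ker r := ha
      rw [← hfix] at ha'
      obtain ⟨m, hm, rfl⟩ := ha'
      have hm0 : π • m = 0 := hm
      obtain ⟨x, hx, y, hy, rfl⟩ := hdec m
      have hy0 : π • y = 0 := by
        have := hm0
        rw [smul_add, hπX x hx, zero_add] at this
        exact this
      obtain ⟨z, hzY, hz⟩ := hann Y hYfree y hy hy0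
      refine ⟨x, hx, ?_⟩
      rw [map_add, hz, hcq z, add_zero]
    · intro Z hZfree hYZ
      refine le_antisymm hYZ ?_
      intro z hz
      obtain ⟨x, hx, y, hy, hzxy⟩ := hdec z
      have hxZ : x ∈ Z := by
        have : x = z - y := by rw [hzxy]; abel
        rw [this]
        exact sub_mem hz (hYZ hy)
      obtain ⟨w, hwZ, hw⟩ := hann Z hZfree x hxZ (hπX x hx)
      obtain ⟨x'', hx'', y'', hy'', rfl⟩ := hdec w
      have hxy'' : x = π ^ (p - 1) • y'' := by
        rw [hw, smul_add, hpq x'' (hπX x'' hx''), zero_add]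
      have hxY : x ∈ Y := hxy'' ▸ Y.smul_mem _ hy''
      have hx0 : x = 0 := hdisj x hx hxY
      rw [hzxy, hx0, zero_add]
      exact hy
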